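/- Let (Y,d) be a compact metric space and g : Y → Y a continuous surjection satisfying Axioms 1 and 2 with constants β > 0, integer K ≥ 1 and 0 < γ < 1. Then the stationary inverse limit (Ŷ, d̂, ĝ) is a Smale space: ĝ is a homeomorphism of the compact metric space (Ŷ, d̂) and there exist constants ε > 0, ε' > 0 and 0 < λ < 1 satisfying conditions (1), (2) and (3) of the definition of a Smale space. -/

import Mathlib

set_option linter.unusedSectionVars false
set_option maxHeartbeats 1000000


open Metric Function Topology

variable {Y : Type*} [MetricSpace Y] [CompactSpace Y]

/-- The stationary inverse limit of `g : Y → Y`. -/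
abbrev InvLim (g : Y → Y) : Type _ :=
  {y : ℕ → Y // ∀ n : ℕ, y n = g (y (n + 1))}

/-- The induced map `ĝ` on the inverse limit. -/
def ghat (g : Y → Y) (y : InvLim g) : InvLim g :=
  ⟨fun n => g (y.1 n), fun n => congrArg g (y.2 n)⟩

/-- The inverse `ĝ⁻¹` of the induced map on the inverse limit. -/
def ghatInv (g : Y → Y) (y : InvLim g) : InvLim g :=
  ⟨fun n => y.1 (n + 1), fun n => y.2 (n + 1)⟩

/-- `d'(x,y) = sup_n γ^n d(x_n, y_n)`. -/
noncomputable def dp (g : Y → Y) (γ : ℝ) (x y : InvLim g) : ℝ :=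
  ⨆ n : ℕ, γ ^ n * dist (x.1 n) (y.1 n)

/-- `d̂(x,y) = ∑_{k=0}^{K-1} γ^{-k} d'(ĝ^{-k} x, ĝ^{-k} y)`. -/
noncomputable def dhat (g : Y → Y) (γ : ℝ) (K : ℕ) (x y : InvLim g) : ℝ :=
  ∑ k ∈ Finset.range K, (γ ^ k)⁻¹ * dp g γ ((ghatInv g)^[k] x) ((ghatInv g)^[k] y)

/-- Axiom 1: `d(x,y) ≤ β` implies `d(g^K x, g^K y) ≤ γ^K d(g^{2K} x, g^{2K} y)`. -/
def axiom1 (g : Y → Y) (β : ℝ) (K : ℕ) (γ : ℝ) : Prop :=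
  ∀ x y : Y, dist x y ≤ β →
    dist (g^[K] x) (g^[K] y) ≤ γ ^ K * dist (g^[2 * K] x) (g^[2 * K] y)

/-- Axiom 2: `g^K(B(g^K x, ε)) ⊆ g^{2K}(B(x, γ ε))` for `0 < ε ≤ β`. -/
def axiom2 (g : Y → Y) (β : ℝ) (K : ℕ) (γ : ℝ) : Prop :=
  ∀ x : Y, ∀ ε : ℝ, 0 < ε → ε ≤ β →
    g^[K] '' Metric.closedBall (g^[K] x) ε ⊆ g^[2 * K] '' Metric.closedBall x (γ * ε)

/-- The local stable set `Ŷ^s(x, ε)` in the inverse limit. -/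
def Shat (g : Y → Y) (γ : ℝ) (K : ℕ) (x : InvLim g) (ε : ℝ) : Set (InvLim g) :=
  {y | ∀ n : ℕ, dhat g γ K ((ghat g)^[n] x) ((ghat g)^[n] y) ≤ ε}

/-- The local unstable set `Ŷ^u(x, ε)` in the inverse limit. -/
def Uhat (g : Y → Y) (γ : ℝ) (K : ℕ) (x : InvLim g) (ε : ℝ) : Set (InvLim g) :=
  {y | ∀ n : ℕ, dhat g γ K ((ghatInv g)^[n] x) ((ghatInv g)^[n] y) ≤ ε}

section lemmas

variable {g : Y → Y} {β γ : ℝ} {K : ℕ} {D : ℝ}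

theorem coord_eq (x : InvLim g) (m j : ℕ) : g^[j] (x.1 (m + j)) = x.1 m := by
  induction j with
  | zero => rfl
  | succ j ih =>
    rw [Function.iterate_succ_apply]
    have h : x.1 (m + (j+1)) = x.1 (m + j + 1) := rfl
    rw [h, ← x.2 (m+j), ih]

theorem ghat_iter_coord (x : InvLim g) (n m : ℕ) :
    ((ghat g)^[n] x).1 m = g^[n] (x.1 m) := by
  induction n generalizing x with
  | zero => rfl
  | succ n ih =>
    rw [Function.iterate_succ_apply, ih, Function.iterate_succ_apply]
    rfl

theorem ghatInv_iter_coord (x : InvLim g) (k m : ℕ) :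
    ((ghatInv g)^[k] x).1 m = x.1 (m + k) := by
  induction k generalizing m with
  | zero => rfl
  | succ k ih =>
    rw [Function.iterate_succ_apply']
    show ((ghatInv g)^[k] x).1 (m+1) = _
    rw [ih (m+1)]
    have h : m+1+k = m+(k+1) := by omega
    rw [h]

theorem ghatInv_ghat (y : InvLim g) : ghatInv g (ghat g y) = y := by
  apply Subtype.ext; funext n; exact (y.2 n).symm

theorem ghat_ghatInv (y : InvLim g) : ghat g (ghatInv g y) = y := by
  apply Subtype.ext; funext n; exact (y.2 n).symm

theorem dp_bdd (hγ0 : 0 ≤ γ) (hγ1 : γ ≤ 1) (hD : ∀ u v : Y, dist u v ≤ D)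
    (x y : InvLim g) : ∀ n, γ ^ n * dist (x.1 n) (y.1 n) ≤ D := by
  intro n
  have h1 : γ ^ n ≤ 1 := pow_le_one₀ hγ0 hγ1
  have h0 : (0:ℝ) ≤ γ ^ n := pow_nonneg hγ0 n
  calc γ ^ n * dist (x.1 n) (y.1 n) ≤ 1 * dist (x.1 n) (y.1 n) := by
        apply mul_le_mul_of_nonneg_right h1 dist_nonneg
    _ = dist (x.1 n) (y.1 n) := one_mul _
    _ ≤ D := hD _ _

theorem dp_bddAbove (hγ0 : 0 ≤ γ) (hγ1 : γ ≤ 1) (hD : ∀ u v : Y, dist u v ≤ D)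
    (x y : InvLim g) : BddAbove (Set.range fun n => γ ^ n * dist (x.1 n) (y.1 n)) :=
  ⟨D, by rintro r ⟨n, rfl⟩; exact dp_bdd hγ0 hγ1 hD x y n⟩

theorem le_dp (hγ0 : 0 ≤ γ) (hγ1 : γ ≤ 1) (hD : ∀ u v : Y, dist u v ≤ D)
    (x y : InvLim g) (n : ℕ) : γ ^ n * dist (x.1 n) (y.1 n) ≤ dp g γ x y :=
  le_ciSup (dp_bddAbove hγ0 hγ1 hD x y) n

theorem dp_le (x y : InvLim g) {c : ℝ}
    (h : ∀ n, γ ^ n * dist (x.1 n) (y.1 n) ≤ c) : dp g γ x y ≤ c :=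
  ciSup_le h

theorem dp_nonneg (hγ0 : 0 ≤ γ) (hγ1 : γ ≤ 1) (hD : ∀ u v : Y, dist u v ≤ D)
    (x y : InvLim g) : 0 ≤ dp g γ x y :=
  le_trans (by positivity) (le_dp hγ0 hγ1 hD x y 0)


theorem dp_shift (x y : InvLim g) (k : ℕ) :
    dp g γ ((ghatInv g)^[k] x) ((ghatInv g)^[k] y)
      = ⨆ m : ℕ, γ ^ m * dist (x.1 (m + k)) (y.1 (m + k)) := by
  unfold dp
  congr 1
  funext m
  rw [ghatInv_iter_coord, ghatInv_iter_coord]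

theorem dhat_nonneg (hγ0 : 0 < γ) (hγ1 : γ ≤ 1) (hD : ∀ u v : Y, dist u v ≤ D)
    (x y : InvLim g) : 0 ≤ dhat g γ K x y := by
  apply Finset.sum_nonneg
  intro k _
  exact mul_nonneg (by positivity) (dp_nonneg hγ0.le hγ1 hD _ _)

theorem dp_le_dhat (hγ0 : 0 < γ) (hγ1 : γ ≤ 1) (hD : ∀ u v : Y, dist u v ≤ D)
    (hK : 1 ≤ K) (x y : InvLim g) : dp g γ x y ≤ dhat g γ K x y := by
  have h0 : (0:ℕ) ∈ Finset.range K := Finset.mem_range.2 hK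
  have := Finset.single_le_sum
    (f := fun k => (γ ^ k)⁻¹ * dp g γ ((ghatInv g)^[k] x) ((ghatInv g)^[k] y))
    (fun k _ => mul_nonneg (by positivity) (dp_nonneg hγ0.le hγ1 hD _ _)) h0
  simpa [dhat] using this

theorem coord_le_dhat (hγ0 : 0 < γ) (hγ1 : γ ≤ 1) (hD : ∀ u v : Y, dist u v ≤ D)
    (hK : 1 ≤ K) (x y : InvLim g) (m : ℕ) :
    γ ^ m * dist (x.1 m) (y.1 m) ≤ dhat g γ K x y :=
  le_trans (le_dp hγ0.le hγ1 hD x y m) (dp_le_dhat hγ0 hγ1 hD hK x y)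

theorem dhat_le (hγ0 : 0 < γ) (hγ1 : γ ≤ 1) (hK : 1 ≤ K) (x y : InvLim g) {c : ℝ}
    (hc : 0 ≤ c)
    (h : ∀ k, k < K → dp g γ ((ghatInv g)^[k] x) ((ghatInv g)^[k] y) ≤ c) :
    dhat g γ K x y ≤ (K : ℝ) * (γ ^ K)⁻¹ * c := by
  calc dhat g γ K x y
      ≤ ∑ k ∈ Finset.range K, (γ ^ K)⁻¹ * c := by
        apply Finset.sum_le_sum
        intro k hk
        have hkK : γ ^ K ≤ γ ^ k :=
          pow_le_pow_of_le_one hγ0.le hγ1 (Finset.mem_range.1 hk).le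
        have h2 : (γ ^ k)⁻¹ ≤ (γ ^ K)⁻¹ := by
          apply one_div_le_one_div_of_le (by positivity) hkK |>.trans_eq (by rw [one_div])
            |>.trans_eq' (by rw [one_div])
        calc (γ ^ k)⁻¹ * dp g γ ((ghatInv g)^[k] x) ((ghatInv g)^[k] y)
            ≤ (γ ^ k)⁻¹ * c := by
              apply mul_le_mul_of_nonneg_left (h k (Finset.mem_range.1 hk)) (by positivity)
          _ ≤ (γ ^ K)⁻¹ * c := mul_le_mul_of_nonneg_right h2 hc
    _ = (K : ℝ) * (γ ^ K)⁻¹ * c := by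
        rw [Finset.sum_const, Finset.card_range, nsmul_eq_mul, mul_assoc]

/-- Expansivity: if all forward iterates stay within `β`, then the `K`-th iterates agree. -/
theorem expansive (hγ0 : 0 < γ) (hγ1 : γ < 1) (hD0 : 0 ≤ D)
    (hD : ∀ u v : Y, dist u v ≤ D) (hK : 1 ≤ K)
    (h1 : axiom1 g β K γ) {u v : Y}
    (h : ∀ n, dist (g^[n] u) (g^[n] v) ≤ β) : g^[K] u = g^[K] v := by
  have key : ∀ r j, dist (g^[j + K] u) (g^[j + K] v) ≤ γ ^ (r * K) * D := by
    intro r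
    induction r with
    | zero => intro j; simpa using hD _ _
    | succ r ih =>
      intro j
      have step : dist (g^[j + K] u) (g^[j + K] v)
          ≤ γ ^ K * dist (g^[j + 2 * K] u) (g^[j + 2 * K] v) := by
        have := h1 (g^[j] u) (g^[j] v) (h j)
        rwa [← Function.iterate_add_apply, ← Function.iterate_add_apply,
          ← Function.iterate_add_apply, ← Function.iterate_add_apply,
          Nat.add_comm K j, Nat.add_comm (2*K) j] at this
      have h2 : dist (g^[j + 2 * K] u) (g^[j + 2 * K] v) ≤ γ ^ (r * K) * D := by
        have := ih (j + K)
        rwa [show j + K + K = j + 2 * K by ring] at this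
      calc dist (g^[j + K] u) (g^[j + K] v)
          ≤ γ ^ K * (γ ^ (r * K) * D) :=
            step.trans (mul_le_mul_of_nonneg_left h2 (by positivity))
        _ = γ ^ ((r + 1) * K) * D := by rw [← mul_assoc, ← pow_add]; ring_nf
  have htend : Filter.Tendsto (fun r : ℕ => γ ^ (r * K) * D) Filter.atTop (nhds 0) := by
    have h1 : Filter.Tendsto (fun r : ℕ => (γ ^ K) ^ r) Filter.atTop (nhds 0) := by
      apply tendsto_pow_atTop_nhds_zero_of_lt_one (by positivity)
      exact pow_lt_one₀ hγ0.le hγ1 (by omega)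
    have := h1.mul_const D
    rw [zero_mul] at this
    convert this using 2 with r
    rw [← pow_mul, Nat.mul_comm]
  have hzero : dist (g^[K] u) (g^[K] v) ≤ 0 :=
    ge_of_tendsto' htend (fun r => key r 0 |>.trans_eq' (by norm_num))
  exact dist_le_zero.1 hzero


theorem shat_coord (hγ0 : 0 < γ) (hγ1 : γ ≤ 1) (hD : ∀ u v : Y, dist u v ≤ D)
    (hK : 1 ≤ K) {x y : InvLim g} {ε' : ℝ} (hy : y ∈ Shat g γ K x ε') :
    ∀ n m, γ ^ m * dist (g^[n] (x.1 m)) (g^[n] (y.1 m)) ≤ ε' := by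
  intro n m
  have h := coord_le_dhat hγ0 hγ1 hD hK ((ghat g)^[n] x) ((ghat g)^[n] y) m
  rw [ghat_iter_coord, ghat_iter_coord] at h
  exact h.trans (hy n)

theorem uhat_coord (hγ0 : 0 < γ) (hγ1 : γ ≤ 1) (hD : ∀ u v : Y, dist u v ≤ D)
    (hK : 1 ≤ K) {x y : InvLim g} {ε' : ℝ} (hy : y ∈ Uhat g γ K x ε') :
    ∀ n, dist (x.1 n) (y.1 n) ≤ ε' := by
  intro n
  have h := coord_le_dhat hγ0 hγ1 hD hK ((ghatInv g)^[n] x) ((ghatInv g)^[n] y) 0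
  rw [ghatInv_iter_coord, ghatInv_iter_coord] at h
  simpa using h.trans (hy n)

/-- Lemma S: points in a common small stable set share their first `K` coordinates. -/
theorem lemS (hβ : 0 < β) (hγ0 : 0 < γ) (hγ1 : γ < 1) (hD0 : 0 ≤ D)
    (hD : ∀ u v : Y, dist u v ≤ D) (hK : 1 ≤ K) (h1 : axiom1 g β K γ)
    {x y z : InvLim g} {ε' : ℝ} (hβε : 2 * ε' ≤ β * γ ^ (2 * K - 1))
    (hy : y ∈ Shat g γ K x ε') (hz : z ∈ Shat g γ K x ε') :
    ∀ m, m < K → y.1 m = z.1 m := by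
  have cy := shat_coord hγ0 hγ1.le hD hK hy
  have cz := shat_coord hγ0 hγ1.le hD hK hz
  have cyz : ∀ n m, γ ^ m * dist (g^[n] (y.1 m)) (g^[n] (z.1 m)) ≤ 2 * ε' := by
    intro n m
    calc γ ^ m * dist (g^[n] (y.1 m)) (g^[n] (z.1 m))
        ≤ γ ^ m * (dist (g^[n] (x.1 m)) (g^[n] (y.1 m)) +
            dist (g^[n] (x.1 m)) (g^[n] (z.1 m))) := by
          apply mul_le_mul_of_nonneg_left (dist_triangle_left _ _ _) (by positivity)
      _ = γ ^ m * dist (g^[n] (x.1 m)) (g^[n] (y.1 m)) +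
            γ ^ m * dist (g^[n] (x.1 m)) (g^[n] (z.1 m)) := by ring
      _ ≤ 2 * ε' := by linarith [cy n m, cz n m]
  -- coordinate distance bound
  have cb : ∀ n m, m ≤ 2 * K - 1 → dist (g^[n] (y.1 m)) (g^[n] (z.1 m)) ≤ β := by
    intro n m hm
    have h2 : γ ^ m * dist (g^[n] (y.1 m)) (g^[n] (z.1 m)) ≤ β * γ ^ m := by
      calc γ ^ m * dist (g^[n] (y.1 m)) (g^[n] (z.1 m)) ≤ 2 * ε' := cyz n m
        _ ≤ β * γ ^ (2 * K - 1) := hβε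
        _ ≤ β * γ ^ m := by
            apply mul_le_mul_of_nonneg_left (pow_le_pow_of_le_one hγ0.le hγ1.le hm) hβ.le
    rw [mul_comm (β) (γ ^ m)] at h2
    exact le_of_mul_le_mul_left h2 (by positivity)
  -- expansivity at coordinate 0
  have hKey : g^[K] (y.1 0) = g^[K] (z.1 0) := by
    apply expansive hγ0 hγ1 hD0 hD hK h1
    intro n
    exact cb n 0 (by omega)
  have hKeyi : ∀ t, g^[K + t] (y.1 0) = g^[K + t] (z.1 0) := by
    intro t
    rw [Nat.add_comm K t, Function.iterate_add_apply, Function.iterate_add_apply, hKey]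
  -- all positive iterates at coordinate 0 agree
  have he : ∀ i, 1 ≤ i → g^[i] (y.1 0) = g^[i] (z.1 0) := by
    intro i hi
    rcases le_or_gt K i with hKi | hiK
    · obtain ⟨t, rfl⟩ : ∃ t, i = K + t := ⟨i - K, by omega⟩
      exact hKeyi t
    · -- 1 ≤ i < K
      have hdist : dist (y.1 (K - i)) (z.1 (K - i)) ≤ β := cb 0 (K - i) (by omega)
      have hA := h1 _ _ hdist
      have e1 : ∀ w : InvLim g, g^[K] (w.1 (K - i)) = g^[i] (w.1 0) := by
        intro w
        have : K = i + (K - i) := by omega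
        rw [this, Function.iterate_add_apply]
        congr 1
        have := coord_eq w 0 (K - i)
        simpa using this
      have e2 : ∀ w : InvLim g, g^[2 * K] (w.1 (K - i)) = g^[K + i] (w.1 0) := by
        intro w
        have : 2 * K = (K + i) + (K - i) := by omega
        rw [this, Function.iterate_add_apply]
        congr 1
        have := coord_eq w 0 (K - i)
        simpa using this
      rw [e1 y, e1 z, e2 y, e2 z, hKeyi i] at hA
      simp only [dist_self, mul_zero] at hA
      exact dist_le_zero.1 hA
  -- first K coordinates agree
  intro m hm
  have hdist : dist (y.1 (m + K)) (z.1 (m + K)) ≤ β := cb 0 (m + K) (by omega)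
  have hA := h1 _ _ hdist
  have e1 : ∀ w : InvLim g, g^[K] (w.1 (m + K)) = w.1 m := fun w => coord_eq w m K
  have e2 : ∀ w : InvLim g, g^[2 * K] (w.1 (m + K)) = g^[K - m] (w.1 0) := by
    intro w
    have : 2 * K = (K - m) + (m + K) := by omega
    rw [this, Function.iterate_add_apply]
    congr 1
    have := coord_eq w 0 (m + K)
    simpa using this
  rw [e1 y, e1 z, e2 y, e2 z, he (K - m) (by omega)] at hA
  simp only [dist_self, mul_zero] at hA
  exact dist_le_zero.1 hA


theorem le_dp_shift (hγ0 : 0 ≤ γ) (hγ1 : γ ≤ 1) (hD : ∀ u v : Y, dist u v ≤ D)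
    (x y : InvLim g) (k m : ℕ) :
    γ ^ m * dist (x.1 (m + k)) (y.1 (m + k))
      ≤ dp g γ ((ghatInv g)^[k] x) ((ghatInv g)^[k] y) := by
  have h := le_dp hγ0 hγ1 hD ((ghatInv g)^[k] x) ((ghatInv g)^[k] y) m
  rwa [ghatInv_iter_coord, ghatInv_iter_coord] at h

theorem stable_step (hγ0 : 0 < γ) (hγ1 : γ ≤ 1) (hD : ∀ u v : Y, dist u v ≤ D)
    {y z : InvLim g} (h : ∀ m, m < K → y.1 m = z.1 m) :
    dhat g γ K (ghat g y) (ghat g z) ≤ γ * dhat g γ K y z := by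
  unfold dhat
  rw [Finset.mul_sum]
  apply Finset.sum_le_sum
  intro k hk
  have hkK := Finset.mem_range.1 hk
  have key : dp g γ ((ghatInv g)^[k] (ghat g y)) ((ghatInv g)^[k] (ghat g z))
      ≤ γ * dp g γ ((ghatInv g)^[k] y) ((ghatInv g)^[k] z) := by
    rw [dp_shift]
    apply ciSup_le
    intro m
    match m with
    | 0 =>
      have : (ghat g y).1 (0 + k) = (ghat g z).1 (0 + k) := by
        show g (y.1 (0 + k)) = g (z.1 (0 + k))
        rw [h (0 + k) (by omega)]
      rw [this]
      simp only [dist_self, mul_zero]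
      exact mul_nonneg hγ0.le (dp_nonneg hγ0.le hγ1 hD _ _)
    | (m + 1) =>
      have e : ∀ w : InvLim g, (ghat g w).1 (m + 1 + k) = w.1 (m + k) := by
        intro w
        show g (w.1 (m + 1 + k)) = w.1 (m + k)
        rw [show m + 1 + k = m + k + 1 by omega, ← w.2 (m + k)]
      rw [e y, e z]
      calc γ ^ (m + 1) * dist (y.1 (m + k)) (z.1 (m + k))
          = γ * (γ ^ m * dist (y.1 (m + k)) (z.1 (m + k))) := by ring
        _ ≤ γ * dp g γ ((ghatInv g)^[k] y) ((ghatInv g)^[k] z) := by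
            exact mul_le_mul_of_nonneg_left (le_dp_shift hγ0.le hγ1 hD y z k m) hγ0.le
  calc (γ ^ k)⁻¹ * dp g γ ((ghatInv g)^[k] (ghat g y)) ((ghatInv g)^[k] (ghat g z))
      ≤ (γ ^ k)⁻¹ * (γ * dp g γ ((ghatInv g)^[k] y) ((ghatInv g)^[k] z)) :=
        mul_le_mul_of_nonneg_left key (by positivity)
    _ = γ * ((γ ^ k)⁻¹ * dp g γ ((ghatInv g)^[k] y) ((ghatInv g)^[k] z)) := by ring

theorem stable_iter (hγ0 : 0 < γ) (hγ1 : γ ≤ 1) (hD : ∀ u v : Y, dist u v ≤ D)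
    {y z : InvLim g} (h : ∀ m, m < K → y.1 m = z.1 m) (n : ℕ) :
    dhat g γ K ((ghat g)^[n] y) ((ghat g)^[n] z) ≤ γ ^ n * dhat g γ K y z := by
  induction n generalizing y z with
  | zero => simp
  | succ n ih =>
    have h' : ∀ m, m < K → (ghat g y).1 m = (ghat g z).1 m := by
      intro m hm
      show g (y.1 m) = g (z.1 m)
      rw [h m hm]
    calc dhat g γ K ((ghat g)^[n+1] y) ((ghat g)^[n+1] z)
        = dhat g γ K ((ghat g)^[n] (ghat g y)) ((ghat g)^[n] (ghat g z)) := by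
          rw [Function.iterate_succ_apply, Function.iterate_succ_apply]
      _ ≤ γ ^ n * dhat g γ K (ghat g y) (ghat g z) := ih h'
      _ ≤ γ ^ n * (γ * dhat g γ K y z) :=
          mul_le_mul_of_nonneg_left (stable_step hγ0 hγ1 hD h) (by positivity)
      _ = γ ^ (n+1) * dhat g γ K y z := by ring

theorem unstable_step (hγ0 : 0 < γ) (hγ1 : γ ≤ 1) (hD : ∀ u v : Y, dist u v ≤ D)
    (hK : 1 ≤ K) (h1 : axiom1 g β K γ)
    {y z : InvLim g} (h : ∀ m, dist (y.1 m) (z.1 m) ≤ β) :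
    dhat g γ K (ghatInv g y) (ghatInv g z) ≤ γ * dhat g γ K y z := by
  have hcc : ∀ m, dist (y.1 (m + K)) (z.1 (m + K)) ≤ γ ^ K * dist (y.1 m) (z.1 m) := by
    intro m
    have hA := h1 (y.1 (m + 2 * K)) (z.1 (m + 2 * K)) (h _)
    have e1 : ∀ w : InvLim g, g^[K] (w.1 (m + 2 * K)) = w.1 (m + K) := by
      intro w
      have := coord_eq w (m + K) K
      rwa [show m + K + K = m + 2 * K by omega] at this
    have e2 : ∀ w : InvLim g, g^[2 * K] (w.1 (m + 2 * K)) = w.1 m := fun w => coord_eq w m (2 * K)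
    rwa [e1 y, e1 z, e2 y, e2 z] at hA
  have dpK : dp g γ ((ghatInv g)^[K] y) ((ghatInv g)^[K] z) ≤ γ ^ K * dp g γ y z := by
    rw [dp_shift]
    apply ciSup_le
    intro m
    calc γ ^ m * dist (y.1 (m + K)) (z.1 (m + K))
        ≤ γ ^ m * (γ ^ K * dist (y.1 m) (z.1 m)) :=
          mul_le_mul_of_nonneg_left (hcc m) (by positivity)
      _ = γ ^ K * (γ ^ m * dist (y.1 m) (z.1 m)) := by ring
      _ ≤ γ ^ K * dp g γ y z :=
          mul_le_mul_of_nonneg_left (le_dp hγ0.le hγ1 hD y z m) (by positivity)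
  -- sum manipulation
  set f : ℕ → ℝ := fun j => (γ ^ j)⁻¹ * dp g γ ((ghatInv g)^[j] y) ((ghatInv g)^[j] z)
    with hf
  have hdhat : dhat g γ K (ghatInv g y) (ghatInv g z)
      = γ * ∑ k ∈ Finset.range K, f (k + 1) := by
    unfold dhat
    rw [Finset.mul_sum]
    apply Finset.sum_congr rfl
    intro k _
    rw [hf]
    simp only
    rw [← Function.iterate_succ_apply, ← Function.iterate_succ_apply]
    rw [pow_succ]
    field_simp
  have hsum : ∑ k ∈ Finset.range K, f (k + 1)
      = (∑ k ∈ Finset.range K, f k) + f K - f 0 := by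
    have h1' := Finset.sum_range_succ' f K
    have h2' := Finset.sum_range_succ f K
    linarith [h1', h2']
  have hfK : f K ≤ f 0 := by
    rw [hf]
    simp only [pow_zero, inv_one, one_mul, Function.iterate_zero_apply]
    calc (γ ^ K)⁻¹ * dp g γ ((ghatInv g)^[K] y) ((ghatInv g)^[K] z)
        ≤ (γ ^ K)⁻¹ * (γ ^ K * dp g γ y z) :=
          mul_le_mul_of_nonneg_left dpK (by positivity)
      _ = dp g γ y z := by field_simp
  rw [hdhat, hsum]
  have : (∑ k ∈ Finset.range K, f k) + f K - f 0 ≤ ∑ k ∈ Finset.range K, f k := by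
    linarith
  calc γ * ((∑ k ∈ Finset.range K, f k) + f K - f 0)
      ≤ γ * ∑ k ∈ Finset.range K, f k := mul_le_mul_of_nonneg_left this hγ0.le
    _ = γ * dhat g γ K y z := rfl

theorem unstable_iter (hγ0 : 0 < γ) (hγ1 : γ ≤ 1) (hD : ∀ u v : Y, dist u v ≤ D)
    (hK : 1 ≤ K) (h1 : axiom1 g β K γ)
    {y z : InvLim g} (h : ∀ m, dist (y.1 m) (z.1 m) ≤ β) (n : ℕ) :
    dhat g γ K ((ghatInv g)^[n] y) ((ghatInv g)^[n] z) ≤ γ ^ n * dhat g γ K y z := by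
  induction n generalizing y z with
  | zero => simp
  | succ n ih =>
    have h' : ∀ m, dist ((ghatInv g y).1 m) ((ghatInv g z).1 m) ≤ β := fun m => h (m + 1)
    calc dhat g γ K ((ghatInv g)^[n+1] y) ((ghatInv g)^[n+1] z)
        = dhat g γ K ((ghatInv g)^[n] (ghatInv g y)) ((ghatInv g)^[n] (ghatInv g z)) := by
          rw [Function.iterate_succ_apply, Function.iterate_succ_apply]
      _ ≤ γ ^ n * dhat g γ K (ghatInv g y) (ghatInv g z) := ih h'
      _ ≤ γ ^ n * (γ * dhat g γ K y z) :=
          mul_le_mul_of_nonneg_left (unstable_step hγ0 hγ1 hD hK h1 h) (by positivity)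
      _ = γ ^ (n+1) * dhat g γ K y z := by ring


theorem dp_self (x : InvLim g) : dp g γ x x = 0 := by
  unfold dp
  simp [ciSup_const]

theorem dhat_self (x : InvLim g) : dhat g γ K x x = 0 := by
  unfold dhat
  simp [dp_self]

theorem dp_comm (x y : InvLim g) : dp g γ x y = dp g γ y x := by
  unfold dp
  congr 1
  funext n
  rw [dist_comm]

theorem dhat_comm (x y : InvLim g) : dhat g γ K x y = dhat g γ K y x := by
  unfold dhat
  apply Finset.sum_congr rfl
  intro k _
  rw [dp_comm]

theorem dp_triangle (hγ0 : 0 ≤ γ) (hγ1 : γ ≤ 1) (hD : ∀ u v : Y, dist u v ≤ D)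
    (x y z : InvLim g) : dp g γ x z ≤ dp g γ x y + dp g γ y z := by
  apply ciSup_le
  intro n
  calc γ ^ n * dist (x.1 n) (z.1 n)
      ≤ γ ^ n * (dist (x.1 n) (y.1 n) + dist (y.1 n) (z.1 n)) :=
        mul_le_mul_of_nonneg_left (dist_triangle _ _ _) (by positivity)
    _ = γ ^ n * dist (x.1 n) (y.1 n) + γ ^ n * dist (y.1 n) (z.1 n) := by ring
    _ ≤ dp g γ x y + dp g γ y z :=
        add_le_add (le_dp hγ0 hγ1 hD x y n) (le_dp hγ0 hγ1 hD y z n)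

theorem dhat_triangle (hγ0 : 0 ≤ γ) (hγ1 : γ ≤ 1) (hD : ∀ u v : Y, dist u v ≤ D)
    (x y z : InvLim g) : dhat g γ K x z ≤ dhat g γ K x y + dhat g γ K y z := by
  unfold dhat
  rw [← Finset.sum_add_distrib]
  apply Finset.sum_le_sum
  intro k _
  rw [← mul_add]
  exact mul_le_mul_of_nonneg_left (dp_triangle hγ0 hγ1 hD _ _ _) (by positivity)

theorem dhat_eq_zero (hγ0 : 0 < γ) (hγ1 : γ ≤ 1) (hD : ∀ u v : Y, dist u v ≤ D)
    (hK : 1 ≤ K) {x y : InvLim g} (h : dhat g γ K x y = 0) : x = y := by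
  apply Subtype.ext
  funext n
  have hc := coord_le_dhat hγ0 hγ1 hD hK x y n
  rw [h] at hc
  have : dist (x.1 n) (y.1 n) ≤ 0 := by
    have hpos : (0:ℝ) < γ ^ n := by positivity
    nlinarith [dist_nonneg (x := x.1 n) (y := y.1 n)]
  exact dist_le_zero.1 this

theorem invLim_compactSpace (hgc : Continuous g) : CompactSpace (InvLim g) := by
  have hclosed : IsClosed {f : ℕ → Y | ∀ n, f n = g (f (n + 1))} := by
    have : {f : ℕ → Y | ∀ n, f n = g (f (n + 1))}
        = ⋂ n, {f : ℕ → Y | f n = g (f (n + 1))} := by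
      ext f; simp [Set.mem_iInter]
    rw [this]
    exact isClosed_iInter fun n =>
      isClosed_eq (continuous_apply n) (hgc.comp (continuous_apply (n + 1)))
  exact isCompact_iff_compactSpace.1 hclosed.isCompact

theorem ghat_continuous (hgc : Continuous g) : Continuous (ghat g) := by
  apply Continuous.subtype_mk
  exact continuous_pi fun n => hgc.comp ((continuous_apply n).comp continuous_subtype_val)

theorem ghatInv_continuous : Continuous (ghatInv (Y := Y) g) := by
  apply Continuous.subtype_mk
  exact continuous_pi fun n => (continuous_apply (n + 1)).comp continuous_subtype_val

/-- The homeomorphism `ĝ` (w.r.t. the product topology). -/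
noncomputable def ghatHomeo (hgc : Continuous g) : InvLim g ≃ₜ InvLim g where
  toFun := ghat g
  invFun := ghatInv g
  left_inv := ghatInv_ghat
  right_inv := ghat_ghatInv
  continuous_toFun := ghat_continuous hgc
  continuous_invFun := ghatInv_continuous

/-- The ball characterization of the product topology by `dhat`. -/
theorem dhat_open_iff (hγ0 : 0 < γ) (hγ1 : γ < 1) (hD0 : 0 ≤ D)
    (hD : ∀ u v : Y, dist u v ≤ D) (hK : 1 ≤ K) (s : Set (InvLim g)) :
    IsOpen s ↔ ∀ x ∈ s, ∃ ε > 0, ∀ y, dhat g γ K x y < ε → y ∈ s := by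
  constructor
  · intro hs x hx
    obtain ⟨t, ht, hts⟩ := isOpen_induced_iff.1 hs
    have hxt : x.val ∈ t := by rwa [← hts] at hx
    obtain ⟨I, u, hu, hIu⟩ := isOpen_pi_iff.1 ht x.val hxt
    have hδ : ∀ i, ∃ δ, 0 < δ ∧ (i ∈ I → Metric.ball (x.1 i) δ ⊆ u i) := by
      intro i
      by_cases hi : i ∈ I
      · obtain ⟨δ, hδ0, hδ⟩ := Metric.isOpen_iff.1 (hu i hi).1 _ (hu i hi).2
        exact ⟨δ, hδ0, fun _ => hδ⟩
      · exact ⟨1, one_pos, fun h => absurd h hi⟩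
    choose δ hδ0 hδball using hδ
    rcases I.eq_empty_or_nonempty with hI | hI
    · refine ⟨1, one_pos, fun y _ => ?_⟩
      rw [← hts]
      apply hIu
      intro i hi
      rw [hI] at hi
      simp at hi
    · refine ⟨I.inf' hI (fun i => γ ^ i * δ i), ?_, ?_⟩
      · apply Finset.lt_inf'_iff _ |>.2
        intro i _
        exact mul_pos (by positivity) (hδ0 i)
      · intro y hy
        rw [← hts]
        apply hIu
        intro i hiI
        have h2 : dhat g γ K x y < γ ^ i * δ i :=
          lt_of_lt_of_le hy (Finset.inf'_le _ (by simpa using hiI))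
        have h3 : γ ^ i * dist (x.1 i) (y.1 i) ≤ dhat g γ K x y :=
          coord_le_dhat hγ0 hγ1.le hD hK x y i
        have h4 : dist (x.1 i) (y.1 i) < δ i := by
          have hpow : (0:ℝ) < γ ^ i := by positivity
          nlinarith
        exact hδball i hiI (by rwa [Metric.mem_ball, dist_comm])
  · intro H
    rw [isOpen_iff_mem_nhds]
    intro x hx
    obtain ⟨ε, hε0, hball⟩ := H x hx
    -- choose N with the tail small
    set C0 : ℝ := (K : ℝ) * (γ ^ K)⁻¹ * ((γ ^ K)⁻¹ * D) with hC0
    have htendN : Filter.Tendsto (fun N : ℕ => C0 * γ ^ N) Filter.atTop (nhds 0) := by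
      have := (tendsto_pow_atTop_nhds_zero_of_lt_one hγ0.le hγ1).const_mul C0
      simpa using this
    obtain ⟨N, hN⟩ := (htendN.eventually_lt_const (by positivity : (0:ℝ) < ε / 2)).exists
    set δ' : ℝ := ε / 2 / ((K : ℝ) * (γ ^ K)⁻¹) with hδ'
    have hδ'0 : 0 < δ' := by
      rw [hδ']
      have : (0:ℝ) < (K : ℝ) * (γ ^ K)⁻¹ := by positivity
      positivity
    -- the basic neighborhood
    set W : Set (ℕ → Y) := ⋂ n ∈ Finset.range N, (fun f : ℕ → Y => f n) ⁻¹'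
      (Metric.ball (x.1 n) δ') with hW
    have hWopen : IsOpen W := by
      apply isOpen_biInter_finset
      intro n _
      exact (continuous_apply n).isOpen_preimage _ Metric.isOpen_ball
    have hxW : x.val ∈ W := by
      rw [hW]
      simp [Metric.mem_ball, hδ'0]
    have hsub : Subtype.val ⁻¹' W ⊆ s := by
      intro y hy
      simp only [hW, Set.mem_preimage, Set.mem_iInter, Metric.mem_ball] at hy
      apply hball
      have hbound : dhat g γ K x y ≤ (K:ℝ) * (γ ^ K)⁻¹ * (δ' + (γ ^ K)⁻¹ * (γ ^ N * D)) := by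
        apply dhat_le hγ0 hγ1.le hK
        · have : (0:ℝ) ≤ (γ ^ K)⁻¹ * (γ ^ N * D) := by positivity
          linarith
        · intro k hkK
          rw [dp_shift]
          apply ciSup_le
          intro m
          rcases lt_or_ge (m + k) N with hmk | hmk
          · have h5 : dist (x.1 (m + k)) (y.1 (m + k)) < δ' := by
              have := hy (m + k) (Finset.mem_range.2 hmk)
              rwa [dist_comm] at this
            have : γ ^ m * dist (x.1 (m + k)) (y.1 (m + k)) ≤ δ' := by
              calc γ ^ m * dist (x.1 (m + k)) (y.1 (m + k))
                  ≤ 1 * dist (x.1 (m + k)) (y.1 (m + k)) :=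
                    mul_le_mul_of_nonneg_right (pow_le_one₀ hγ0.le hγ1.le) dist_nonneg
                _ ≤ δ' := by rw [one_mul]; exact h5.le
            have h6 : (0:ℝ) ≤ (γ ^ K)⁻¹ * (γ ^ N * D) := by positivity
            linarith
          · have h7 : γ ^ m ≤ (γ ^ K)⁻¹ * γ ^ N := by
              have hmN : N ≤ m + K := by omega
              have h8 : γ ^ m * γ ^ K ≤ γ ^ N := by
                rw [← pow_add]
                exact pow_le_pow_of_le_one hγ0.le hγ1.le hmN
              have hKpos : (0:ℝ) < γ ^ K := by positivity
              rw [inv_mul_eq_div, le_div_iff₀ hKpos]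
              exact h8
            calc γ ^ m * dist (x.1 (m + k)) (y.1 (m + k))
                ≤ ((γ ^ K)⁻¹ * γ ^ N) * D := by
                  apply mul_le_mul h7 (hD _ _) dist_nonneg (by positivity)
              _ = (γ ^ K)⁻¹ * (γ ^ N * D) := by ring
              _ ≤ δ' + (γ ^ K)⁻¹ * (γ ^ N * D) := by linarith
      calc dhat g γ K x y ≤ (K:ℝ) * (γ ^ K)⁻¹ * (δ' + (γ ^ K)⁻¹ * (γ ^ N * D)) := hbound
        _ = (K:ℝ) * (γ ^ K)⁻¹ * δ' + C0 * γ ^ N := by rw [hC0]; ring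
        _ < ε / 2 + ε / 2 := by
            apply add_lt_add_of_le_of_lt _ hN
            rw [hδ']
            have hKγ : ((K : ℝ) * (γ ^ K)⁻¹) ≠ 0 := by positivity
            apply le_of_eq
            field_simp
        _ = ε := by ring
    have : Subtype.val ⁻¹' W ∈ nhds x := by
      apply IsOpen.mem_nhds
      · exact hWopen.preimage continuous_subtype_val
      · exact hxW
    exact Filter.mem_of_superset this hsub


/-- Uniform-continuity modulus for the first `M` iterates of `g`. -/
theorem ucont (hgc : Continuous g) (M : ℕ) {δ : ℝ} (hδ : 0 < δ) :
    ∃ ε, 0 < ε ∧ ε ≤ δ ∧ ∀ i ≤ M, ∀ u v : Y, dist u v ≤ ε → dist (g^[i] u) (g^[i] v) ≤ δ := by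
  induction M with
  | zero =>
    refine ⟨δ, hδ, le_refl _, ?_⟩
    intro i hi u v huv
    interval_cases i
    simpa using huv
  | succ M ih =>
    obtain ⟨ε₁, hε₁0, hε₁δ, hε₁⟩ := ih
    have hu : UniformContinuous g^[M + 1] :=
      CompactSpace.uniformContinuous_of_continuous (hgc.iterate (M + 1))
    obtain ⟨ε₂, hε₂0, hε₂⟩ := Metric.uniformContinuous_iff.1 hu δ hδ
    refine ⟨min ε₁ (ε₂ / 2), by positivity, (min_le_left _ _).trans hε₁δ, ?_⟩
    intro i hi u v huv
    rcases Nat.lt_or_ge i (M + 1) with hiM | hiM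
    · exact hε₁ i (by omega) u v (huv.trans (min_le_left _ _))
    · have hi' : i = M + 1 := by omega
      subst hi'
      exact (hε₂ (lt_of_le_of_lt (huv.trans (min_le_right _ _)) (by linarith))).le

/-- The backward chain of approximate preimages produced by Axiom 2. -/
theorem chain (hγ0 : 0 < γ) (hγ1 : γ < 1) (hK : 1 ≤ K)
    (h2 : axiom2 g β K γ) {x y : InvLim g} {ε : ℝ} (hε0 : 0 < ε) (hεβ : ε ≤ β)
    (hxy0 : dist (x.1 0) (y.1 0) ≤ ε) :
    ∃ p : ℕ → Y, (∀ j, dist (p j) (y.1 ((j + 1) * K)) ≤ γ ^ (j + 1) * ε) ∧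
      g^[2 * K] (p 0) = g^[K] (x.1 0) ∧
      ∀ j, g^[2 * K] (p (j + 1)) = g^[K] (p j) := by
  have hcoordK : ∀ (j : ℕ), g^[K] (y.1 ((j + 1) * K)) = y.1 (j * K) := by
    intro j
    have := coord_eq y (j * K) K
    rwa [show j * K + K = (j + 1) * K by ring] at this
  have hpow : ∀ j : ℕ, (0:ℝ) < γ ^ (j + 1) * ε := fun j => by positivity
  have hpowβ : ∀ j : ℕ, γ ^ (j + 1) * ε ≤ β := by
    intro j
    calc γ ^ (j + 1) * ε ≤ 1 * ε := by
          apply mul_le_mul_of_nonneg_right (pow_le_one₀ hγ0.le hγ1.le) hε0.le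
      _ ≤ β := by rw [one_mul]; exact hεβ
  -- base point
  have hbase : ∃ w, dist w (y.1 (1 * K)) ≤ γ ^ 1 * ε ∧ g^[2 * K] w = g^[K] (x.1 0) := by
    have hx0 : x.1 0 ∈ Metric.closedBall (g^[K] (y.1 (1 * K))) ε := by
      rw [Metric.mem_closedBall, hcoordK 0]
      simpa using hxy0
    have himg : g^[K] (x.1 0) ∈ g^[K] '' Metric.closedBall (g^[K] (y.1 (1 * K))) ε :=
      Set.mem_image_of_mem _ hx0
    obtain ⟨w, hw, hweq⟩ := h2 (y.1 (1 * K)) ε hε0 hεβ himg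
    exact ⟨w, by simpa [pow_one] using Metric.mem_closedBall.1 hw, hweq⟩
  -- inductive step
  have hstep : ∀ j (w : Y), dist w (y.1 ((j + 1) * K)) ≤ γ ^ (j + 1) * ε →
      ∃ w', dist w' (y.1 ((j + 2) * K)) ≤ γ ^ (j + 2) * ε ∧ g^[2 * K] w' = g^[K] w := by
    intro j w hw
    have hwmem : w ∈ Metric.closedBall (g^[K] (y.1 ((j + 2) * K))) (γ ^ (j + 1) * ε) := by
      rw [Metric.mem_closedBall, hcoordK (j + 1)]
      exact hw
    have himg : g^[K] w ∈ g^[K] '' Metric.closedBall (g^[K] (y.1 ((j + 2) * K)))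
        (γ ^ (j + 1) * ε) := Set.mem_image_of_mem _ hwmem
    obtain ⟨w', hw', hweq⟩ := h2 (y.1 ((j + 2) * K)) (γ ^ (j + 1) * ε) (hpow j) (hpowβ j) himg
    refine ⟨w', ?_, hweq⟩
    have := Metric.mem_closedBall.1 hw'
    calc dist w' (y.1 ((j + 2) * K)) ≤ γ * (γ ^ (j + 1) * ε) := this
      _ = γ ^ (j + 2) * ε := by ring
  choose w0 hw01 hw02 using hbase
  choose step hstep1 hstep2 using hstep
  let pFn : ∀ j : ℕ, {w : Y // dist w (y.1 ((j + 1) * K)) ≤ γ ^ (j + 1) * ε} := fun j =>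
    Nat.rec ⟨w0, hw01⟩ (fun j prev => ⟨step j prev.1 prev.2, hstep1 j prev.1 prev.2⟩) j
  refine ⟨fun j => (pFn j).1, fun j => (pFn j).2, hw02, ?_⟩
  intro j
  exact hstep2 j (pFn j).1 (pFn j).2

/-- Construction of the bracket point via the Axiom 2 chain. -/
theorem bracket_z (hγ0 : 0 < γ) (hγ1 : γ < 1) (hK : 1 ≤ K)
    (h2 : axiom2 g β K γ) {x y : InvLim g} {ε δ : ℝ} (hε0 : 0 < ε) (hεβ : ε ≤ β)
    (hmod : ∀ i, i ≤ 2 * K → ∀ u v : Y, dist u v ≤ ε → dist (g^[i] u) (g^[i] v) ≤ δ)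
    (hxy0 : dist (x.1 0) (y.1 0) ≤ ε) :
    ∃ z : InvLim g, g^[K] (z.1 0) = g^[K] (x.1 0) ∧ ∀ n, dist (z.1 n) (y.1 n) ≤ δ := by
  obtain ⟨p, hp, hp0, hpchain⟩ := chain hγ0 hγ1 hK h2 hε0 hεβ hxy0
  have hKpos : 0 < K := hK
  -- the candidate point
  set zf : ℕ → Y := fun n => g^[2 * K - n % K] (p (n / K + 1)) with hzf
  have hchain : ∀ n, zf n = g (zf (n + 1)) := by
    intro n
    have hr : n % K < K := Nat.mod_lt _ hKpos
    have hn : K * (n / K) + n % K = n := Nat.div_add_mod n K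
    rcases Nat.lt_or_ge (n % K + 1) K with hcase | hcase
    · -- same block
      have hsplit : n + 1 = (n % K + 1) + K * (n / K) := by omega
      have e1 : (n + 1) % K = n % K + 1 := by
        conv_lhs => rw [hsplit]
        rw [Nat.add_mul_mod_self_left]
        exact Nat.mod_eq_of_lt hcase
      have e2 : (n + 1) / K = n / K := by
        conv_lhs => rw [hsplit]
        rw [Nat.add_mul_div_left _ _ hKpos, Nat.div_eq_of_lt hcase, Nat.zero_add]
      rw [hzf]
      simp only
      rw [e1, e2, show 2 * K - n % K = (2 * K - (n % K + 1)) + 1 by omega,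
        Function.iterate_succ_apply']
    · -- block boundary: n % K = K - 1
      have hK1 : n + 1 = K * (n / K) + K := by omega
      have hnK : n + 1 = K * (n / K + 1) := by rw [Nat.mul_succ]; omega
      have e1 : (n + 1) % K = 0 := by rw [hnK, Nat.mul_mod_right]
      have e2 : (n + 1) / K = n / K + 1 := by rw [hnK, Nat.mul_div_cancel_left _ hKpos]
      have hrK : n % K = K - 1 := by omega
      rw [hzf]
      simp only
      rw [e1, e2, hrK]
      have e3 : (2 * K - 0) = 2 * K := by omega
      rw [e3]
      have e4 : g (g^[2 * K] (p (n / K + 1 + 1))) = g^[2 * K + 1] (p (n / K + 1 + 1)) := by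
        rw [Function.iterate_succ_apply']
      rw [e4, show 2 * K + 1 = 1 + 2 * K by ring, Function.iterate_add_apply,
        hpchain (n / K + 1)]
      rw [show g^[1] (g^[K] (p (n / K + 1))) = g^[1 + K] (p (n / K + 1)) by
        rw [Function.iterate_add_apply]]
      congr 1
      omega
  refine ⟨⟨zf, hchain⟩, ?_, ?_⟩
  · -- g^K z_0 = g^K x_0
    show g^[K] (zf 0) = g^[K] (x.1 0)
    have e0 : zf 0 = g^[2 * K] (p 1) := by
      rw [hzf]
      norm_num
    have h01 : g^[2 * K] (p (0 + 1)) = g^[K] (p 0) := hpchain 0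
    norm_num at h01
    rw [e0, h01, ← Function.iterate_add_apply, show K + K = 2 * K by ring, hp0]
  · intro n
    show dist (zf n) (y.1 n) ≤ δ
    have hr : n % K < K := Nat.mod_lt _ hKpos
    have hn : K * (n / K) + n % K = n := Nat.div_add_mod n K
    have hyn : y.1 n = g^[2 * K - n % K] (y.1 ((n / K + 2) * K)) := by
      have harith : n + (2 * K - n % K) = (n / K + 2) * K := by
        have hmul : (n / K + 2) * K = K * (n / K) + 2 * K := by ring
        omega
      have hco := coord_eq y n (2 * K - n % K)
      rw [harith] at hco
      exact hco.symm
    rw [hzf, hyn]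
    simp only
    apply hmod (2 * K - n % K) (by omega)
    calc dist (p (n / K + 1)) (y.1 ((n / K + 2) * K))
        ≤ γ ^ (n / K + 2) * ε := by
          have := hp (n / K + 1)
          rwa [show n / K + 1 + 1 = n / K + 2 by omega] at this
      _ ≤ 1 * ε := by
          apply mul_le_mul_of_nonneg_right (pow_le_one₀ hγ0.le hγ1.le) hε0.le
      _ = ε := one_mul _


theorem mem_shat_of_terms (hγ0 : 0 < γ) (hγ1 : γ ≤ 1) (hK : 1 ≤ K)
    {x z : InvLim g} {c : ℝ} (hc : 0 ≤ c)
    (h : ∀ n k m, k < K → γ ^ m * dist (g^[n] (x.1 (m + k))) (g^[n] (z.1 (m + k))) ≤ c) :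
    ∀ n, dhat g γ K ((ghat g)^[n] x) ((ghat g)^[n] z) ≤ (K : ℝ) * (γ ^ K)⁻¹ * c := by
  intro n
  apply dhat_le hγ0 hγ1 hK _ _ hc
  intro k hk
  rw [dp_shift]
  apply ciSup_le
  intro m
  have e := h n k m hk
  rwa [← ghat_iter_coord, ← ghat_iter_coord] at e

theorem mem_uhat_of_close (hγ0 : 0 < γ) (hγ1 : γ ≤ 1) (hK : 1 ≤ K)
    {y z : InvLim g} {δ : ℝ} (hδ0 : 0 ≤ δ) (h : ∀ m, dist (y.1 m) (z.1 m) ≤ δ) :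
    ∀ n, dhat g γ K ((ghatInv g)^[n] y) ((ghatInv g)^[n] z) ≤ (K : ℝ) * (γ ^ K)⁻¹ * δ := by
  intro n
  apply dhat_le hγ0 hγ1 hK _ _ hδ0
  intro k hk
  rw [show (ghatInv g)^[k] ((ghatInv g)^[n] y) = (ghatInv g)^[k + n] y from
      (Function.iterate_add_apply _ k n y).symm,
    show (ghatInv g)^[k] ((ghatInv g)^[n] z) = (ghatInv g)^[k + n] z from
      (Function.iterate_add_apply _ k n z).symm,
    dp_shift]
  apply ciSup_le
  intro m
  calc γ ^ m * dist (y.1 (m + (k + n))) (z.1 (m + (k + n)))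
      ≤ 1 * δ := mul_le_mul (pow_le_one₀ hγ0.le hγ1) (h _) dist_nonneg zero_le_one
    _ = δ := one_mul _

end lemmas

/-- **Theorem A (Smale space part).** If `(Y,d,g)` satisfies Axioms 1 and 2 then
`(Ŷ, d̂, ĝ)` is a Smale space: `ĝ` is a homeomorphism of the compact metric space
`(Ŷ, d̂)`, and there are constants `ε > 0`, `ε' > 0`, `0 < λ < 1` satisfying
conditions (1), (2), (3) of the definition of a Smale space. -/
theorem stmt0 (g : Y → Y) (hgc : Continuous g) (hgs : Function.Surjective g)
    (β γ : ℝ) (K : ℕ) (hβ : 0 < β) (hK : 1 ≤ K) (hγ0 : 0 < γ) (hγ1 : γ < 1)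
    (h1 : axiom1 g β K γ) (h2 : axiom2 g β K γ) :
    (∃ m : MetricSpace (InvLim g),
      (∀ x y : InvLim g, m.dist x y = dhat g γ K x y) ∧
      @CompactSpace (InvLim g) m.toUniformSpace.toTopologicalSpace ∧
      @IsHomeomorph (InvLim g) (InvLim g) m.toUniformSpace.toTopologicalSpace
        m.toUniformSpace.toTopologicalSpace (ghat g)) ∧
    ∃ εY εY' lam : ℝ, 0 < εY ∧ 0 < εY' ∧ 0 < lam ∧ lam < 1 ∧
      (∀ (x y z : InvLim g) (n : ℕ), y ∈ Shat g γ K x εY' → z ∈ Shat g γ K x εY' →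
        dhat g γ K ((ghat g)^[n] y) ((ghat g)^[n] z) ≤ lam ^ n * dhat g γ K y z) ∧
      (∀ (x y z : InvLim g) (n : ℕ), y ∈ Uhat g γ K x εY' → z ∈ Uhat g γ K x εY' →
        dhat g γ K ((ghatInv g)^[n] y) ((ghatInv g)^[n] z) ≤ lam ^ n * dhat g γ K y z) ∧
      (∀ x y : InvLim g, dhat g γ K x y ≤ εY →
        ∃! z : InvLim g, z ∈ Shat g γ K x εY' ∩ Uhat g γ K y εY') := by
  obtain ⟨D, hD0, hD⟩ : ∃ D : ℝ, 0 ≤ D ∧ ∀ u v : Y, dist u v ≤ D := by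
    obtain ⟨C, hC⟩ := Metric.isBounded_iff.1
      (isCompact_univ : IsCompact (Set.univ : Set Y)).isBounded
    exact ⟨max C 0, le_max_right _ _, fun u v =>
      (hC trivial trivial).trans (le_max_left _ _)⟩
  haveI hcomp : CompactSpace (InvLim g) := invLim_compactSpace hgc
  constructor
  · refine ⟨MetricSpace.ofDistTopology (dhat g γ K) dhat_self dhat_comm
      (dhat_triangle hγ0.le hγ1.le hD) (dhat_open_iff hγ0 hγ1 hD0 hD hK)
      (fun x y h => dhat_eq_zero hγ0 hγ1.le hD hK h), fun x y => rfl, ?_, ?_⟩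
    · exact hcomp
    · exact (ghatHomeo hgc).isHomeomorph
  · -- constants
    set εY' : ℝ := β * γ ^ (2 * K - 1) / 2 with hεY'def
    have hεY'pos : 0 < εY' := by rw [hεY'def]; positivity
    have hεY'β : 2 * εY' ≤ β * γ ^ (2 * K - 1) := le_of_eq (by rw [hεY'def]; ring)
    have hγpow1 : γ ^ (2 * K - 1) ≤ 1 := pow_le_one₀ hγ0.le hγ1.le
    have h2εY'β : 2 * εY' ≤ β := hεY'β.trans (by nlinarith)
    have hKR : (0:ℝ) < (K : ℝ) := by
      have : 0 < K := hK
      exact_mod_cast this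
    set η₀ : ℝ := εY' * γ ^ K / (3 * K) with hη₀def
    have hη₀pos : 0 < η₀ := by rw [hη₀def]; positivity
    obtain ⟨ε₁, hε₁0, hε₁η, hε₁⟩ := ucont hgc (M := 2 * K) hη₀pos
    set δ₀ : ℝ := min η₀ (ε₁ / 2) with hδ₀def
    have hδ₀pos : 0 < δ₀ := lt_min hη₀pos (by positivity)
    obtain ⟨ε₂, hε₂0, hε₂δ, hε₂⟩ := ucont hgc (M := 2 * K) hδ₀pos
    set εch : ℝ := min ε₂ β with hεchdef
    have hεchpos : 0 < εch := lt_min hε₂0 hβ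
    set εY : ℝ := min εch (min (η₀ * γ ^ K) (ε₁ / 2)) with hεYdef
    have hεYpos : 0 < εY := lt_min hεchpos (lt_min (by positivity) (by positivity))
    refine ⟨εY, εY', γ, hεYpos, hεY'pos, hγ0, hγ1, ?_, ?_, ?_⟩
    · -- condition (1): stable contraction
      intro x y z n hy hz
      exact stable_iter hγ0 hγ1.le hD (lemS hβ hγ0 hγ1 hD0 hD hK h1 hεY'β hy hz) n
    · -- condition (2): unstable contraction
      intro x y z n hy hz
      have hc : ∀ m, dist (y.1 m) (z.1 m) ≤ β := by
        intro m
        have a1 := uhat_coord hγ0 hγ1.le hD hK hy m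
        have a2 := uhat_coord hγ0 hγ1.le hD hK hz m
        calc dist (y.1 m) (z.1 m)
            ≤ dist (x.1 m) (y.1 m) + dist (x.1 m) (z.1 m) := dist_triangle_left _ _ _
          _ ≤ β := by linarith
      exact unstable_iter hγ0 hγ1.le hD hK h1 hc n
    · -- condition (3): bracket
      intro x y hxy
      have hcoordxy : ∀ i, γ ^ i * dist (x.1 i) (y.1 i) ≤ εY := fun i =>
        (coord_le_dhat hγ0 hγ1.le hD hK x y i).trans hxy
      have hxy0 : dist (x.1 0) (y.1 0) ≤ εY := by
        have := hcoordxy 0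
        simpa using this
      have hεYch : εY ≤ εch := min_le_left _ _
      have hεYη : εY ≤ η₀ * γ ^ K := (min_le_right _ _).trans (min_le_left _ _)
      have hεYε₁ : εY ≤ ε₁ / 2 := (min_le_right _ _).trans (min_le_right _ _)
      have hmod : ∀ i, i ≤ 2 * K → ∀ u v : Y, dist u v ≤ εch →
          dist (g^[i] u) (g^[i] v) ≤ δ₀ := fun i hi u v huv =>
        hε₂ i hi u v (huv.trans (min_le_left _ _))
      obtain ⟨z, hz1, hz2⟩ := bracket_z hγ0 hγ1 hK h2 hεchpos (min_le_right _ _) hmod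
        (hxy0.trans hεYch)
      have hδ₀η : δ₀ ≤ η₀ := min_le_left _ _
      have hδ₀ε₁ : δ₀ ≤ ε₁ / 2 := min_le_right _ _
      have hxz0 : dist (x.1 0) (z.1 0) ≤ ε₁ := by
        calc dist (x.1 0) (z.1 0)
            ≤ dist (x.1 0) (y.1 0) + dist (z.1 0) (y.1 0) := dist_triangle_right _ _ _
          _ ≤ ε₁ / 2 + ε₁ / 2 := add_le_add (hxy0.trans hεYε₁) ((hz2 0).trans hδ₀ε₁)
          _ = ε₁ := by ring
      have hη : ∀ i, i ≤ 2 * K → dist (g^[i] (x.1 0)) (g^[i] (z.1 0)) ≤ η₀ := fun i hi =>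
        hε₁ i hi _ _ hxz0
      -- the per-term bound for Shat membership
      have hterm : ∀ n k m, k < K →
          γ ^ m * dist (g^[n] (x.1 (m + k))) (g^[n] (z.1 (m + k)))
            ≤ εY / γ ^ K + δ₀ + η₀ := by
        intro n k m hkK
        rcases Nat.lt_or_ge n (m + k + 1) with hnj | hnj
        · -- n ≤ m + k
          have hnle : n ≤ m + k := by omega
          have exj : ∀ w : InvLim g, g^[n] (w.1 (m + k)) = w.1 (m + k - n) := by
            intro w
            have := coord_eq w (m + k - n) n
            rwa [show m + k - n + n = m + k by omega] at this
          rw [exj x, exj z]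
          have h8 : γ ^ m * γ ^ K ≤ γ ^ (m + k - n) := by
            rw [← pow_add]
            exact pow_le_pow_of_le_one hγ0.le hγ1.le (by omega)
          have hxiy : γ ^ m * dist (x.1 (m + k - n)) (y.1 (m + k - n)) ≤ εY / γ ^ K := by
            rw [le_div_iff₀ (by positivity)]
            calc γ ^ m * dist (x.1 (m + k - n)) (y.1 (m + k - n)) * γ ^ K
                = (γ ^ m * γ ^ K) * dist (x.1 (m + k - n)) (y.1 (m + k - n)) := by ring
              _ ≤ γ ^ (m + k - n) * dist (x.1 (m + k - n)) (y.1 (m + k - n)) :=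
                  mul_le_mul_of_nonneg_right h8 dist_nonneg
              _ ≤ εY := hcoordxy _
          have hyz : γ ^ m * dist (y.1 (m + k - n)) (z.1 (m + k - n)) ≤ δ₀ := by
            calc γ ^ m * dist (y.1 (m + k - n)) (z.1 (m + k - n))
                ≤ 1 * δ₀ := mul_le_mul (pow_le_one₀ hγ0.le hγ1.le)
                  (by rw [dist_comm]; exact hz2 _) dist_nonneg zero_le_one
              _ = δ₀ := one_mul _
          calc γ ^ m * dist (x.1 (m + k - n)) (z.1 (m + k - n))
              ≤ γ ^ m * (dist (x.1 (m + k - n)) (y.1 (m + k - n)) +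
                  dist (y.1 (m + k - n)) (z.1 (m + k - n))) :=
                mul_le_mul_of_nonneg_left (dist_triangle _ _ _) (by positivity)
            _ = γ ^ m * dist (x.1 (m + k - n)) (y.1 (m + k - n)) +
                  γ ^ m * dist (y.1 (m + k - n)) (z.1 (m + k - n)) := by ring
            _ ≤ εY / γ ^ K + δ₀ + η₀ := by linarith [hη₀pos.le]
        · -- n > m + k
          have exj : ∀ w : InvLim g, g^[n] (w.1 (m + k)) = g^[n - (m + k)] (w.1 0) := by
            intro w
            conv_lhs => rw [show n = (n - (m + k)) + (m + k) by omega,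
              Function.iterate_add_apply]
            congr 1
            have := coord_eq w 0 (m + k)
            simpa using this
          rw [exj x, exj z]
          rcases Nat.lt_or_ge (n - (m + k)) K with hiK | hiK
          · have hb := hη (n - (m + k)) (by omega)
            have h9 : (0:ℝ) ≤ εY / γ ^ K := by positivity
            calc γ ^ m * dist (g^[n - (m + k)] (x.1 0)) (g^[n - (m + k)] (z.1 0))
                ≤ 1 * η₀ := mul_le_mul (pow_le_one₀ hγ0.le hγ1.le) hb dist_nonneg zero_le_one
              _ = η₀ := one_mul _
              _ ≤ εY / γ ^ K + δ₀ + η₀ := by linarith [hδ₀pos.le]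
          · have e : g^[n - (m + k)] (x.1 0) = g^[n - (m + k)] (z.1 0) := by
              conv_lhs => rw [show n - (m + k) = (n - (m + k) - K) + K by omega,
                Function.iterate_add_apply, ← hz1, ← Function.iterate_add_apply,
                show n - (m + k) - K + K = n - (m + k) by omega]
            rw [e]
            simp only [dist_self, mul_zero]
            have h9 : (0:ℝ) ≤ εY / γ ^ K := by positivity
            linarith [hδ₀pos.le, hη₀pos.le]
      have harith : (K : ℝ) * (γ ^ K)⁻¹ * (3 * η₀) = εY' := by
        rw [hη₀def]
        field_simp
      have hSmem : z ∈ Shat g γ K x εY' := by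
        intro n
        have hb := mem_shat_of_terms hγ0 hγ1.le hK (by positivity) hterm n
        have hc1 : εY / γ ^ K ≤ η₀ := by
          rw [div_le_iff₀ (by positivity)]
          exact hεYη
        calc dhat g γ K ((ghat g)^[n] x) ((ghat g)^[n] z)
            ≤ (K : ℝ) * (γ ^ K)⁻¹ * (εY / γ ^ K + δ₀ + η₀) := hb
          _ ≤ (K : ℝ) * (γ ^ K)⁻¹ * (3 * η₀) := by
              apply mul_le_mul_of_nonneg_left (by linarith) (by positivity)
          _ = εY' := harith
      have hUmem : z ∈ Uhat g γ K y εY' := by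
        intro n
        have hyz : ∀ m, dist (y.1 m) (z.1 m) ≤ δ₀ := by
          intro m
          rw [dist_comm]
          exact hz2 m
        have hb := mem_uhat_of_close hγ0 hγ1.le hK hδ₀pos.le hyz n
        calc dhat g γ K ((ghatInv g)^[n] y) ((ghatInv g)^[n] z)
            ≤ (K : ℝ) * (γ ^ K)⁻¹ * δ₀ := hb
          _ ≤ (K : ℝ) * (γ ^ K)⁻¹ * (3 * η₀) := by
              apply mul_le_mul_of_nonneg_left (by linarith [hδ₀η, hη₀pos.le]) (by positivity)
          _ = εY' := harith
      -- uniqueness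
      have huniq : ∀ z₁ z₂ : InvLim g,
          z₁ ∈ Shat g γ K x εY' ∩ Uhat g γ K y εY' →
          z₂ ∈ Shat g γ K x εY' ∩ Uhat g γ K y εY' → z₁ = z₂ := by
        intro z₁ z₂ hz₁ hz₂
        have hcoK := lemS hβ hγ0 hγ1 hD0 hD hK h1 hεY'β hz₁.1 hz₂.1
        have hcb : ∀ m, dist (z₁.1 m) (z₂.1 m) ≤ β := by
          intro m
          have a1 := uhat_coord hγ0 hγ1.le hD hK hz₁.2 m
          have a2 := uhat_coord hγ0 hγ1.le hD hK hz₂.2 m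
          calc dist (z₁.1 m) (z₂.1 m)
              ≤ dist (y.1 m) (z₁.1 m) + dist (y.1 m) (z₂.1 m) := dist_triangle_left _ _ _
            _ ≤ β := by linarith
        apply Subtype.ext
        funext m
        induction m using Nat.strong_induction_on with
        | _ m ih =>
          rcases Nat.lt_or_ge m K with hm | hm
          · exact hcoK m hm
          · have hA := h1 (z₁.1 (m + K)) (z₂.1 (m + K)) (hcb (m + K))
            have e1 : ∀ w : InvLim g, g^[K] (w.1 (m + K)) = w.1 m := fun w => coord_eq w m K
            have e2 : ∀ w : InvLim g, g^[2 * K] (w.1 (m + K)) = w.1 (m - K) := by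
              intro w
              have := coord_eq w (m - K) (2 * K)
              rwa [show m - K + 2 * K = m + K by omega] at this
            rw [e1 z₁, e1 z₂, e2 z₁, e2 z₂, ih (m - K) (by omega)] at hA
            simp only [dist_self, mul_zero] at hA
            exact dist_le_zero.1 hA
      exact ⟨z, ⟨hSmem, hUmem⟩, fun w hw => huniq w z hw ⟨hSmem, hUmem⟩⟩
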